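/- Assume P_A := P(Y ≤ μ) > 0 and P_B := P(Y > μ) > 0, and set μ_A = E[Y | Y ≤ μ] and μ_B = E[Y | Y > μ]. Then δ_Y(μ) = (μ − μ_A)(μ_B − μ)/(μ_B − μ_A). -/

import Mathlib

open MeasureTheory

/-- Conditional expectation `E[Y | A] = E[1_A · Y] / P(A)`. -/
noncomputable def condMean {Ω : Type*} [MeasurableSpace Ω]
    (P : Measure Ω) (Y : Ω → ℝ) (A : Set Ω) : ℝ :=
  (∫ ω in A, Y ω ∂P) / (P A).toReal

/-- With `Y` integrable, `P(a < Y ≤ b) = 1`, `μ = E[Y]`,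
`δ_Y(s) = |min(s,μ) − E[min(s,Y)]|`, if `P_A = P(Y ≤ μ) > 0` and `P_B = P(Y > μ) > 0`,
and `μ_A = E[Y | Y ≤ μ]`, `μ_B = E[Y | Y > μ]`, then
`δ_Y(μ) = (μ − μ_A)(μ_B − μ)/(μ_B − μ_A)`. -/
theorem delta_at_mean_formula {Ω : Type*} [MeasurableSpace Ω]
    (P : Measure Ω) [IsProbabilityMeasure P]
    (a b : ℝ) (hab : a < b)
    (Y : Ω → ℝ) (hY : Integrable Y P)
    (hsupp : P {ω | Y ω ∈ Set.Ioc a b} = 1)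
    (hA : 0 < (P {ω | Y ω ≤ ∫ ω', Y ω' ∂P}).toReal)
    (hB : 0 < (P {ω | (∫ ω', Y ω' ∂P) < Y ω}).toReal) :
    |min (∫ ω, Y ω ∂P) (∫ ω, Y ω ∂P) - ∫ ω, min (∫ ω', Y ω' ∂P) (Y ω) ∂P|
      = (((∫ ω, Y ω ∂P) - condMean P Y {ω | Y ω ≤ ∫ ω', Y ω' ∂P})
          * (condMean P Y {ω | (∫ ω', Y ω' ∂P) < Y ω} - ∫ ω, Y ω ∂P))
        / (condMean P Y {ω | (∫ ω', Y ω' ∂P) < Y ω}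
            - condMean P Y {ω | Y ω ≤ ∫ ω', Y ω' ∂P}) := by
  set μ := ∫ ω', Y ω' ∂P with hμdef
  obtain ⟨g, hgm, hge⟩ := hY.1
  have hgi : Integrable g P := hY.congr hge
  set A : Set Ω := {ω | g ω ≤ μ} with hAdef
  have hAm : MeasurableSet A := measurableSet_le hgm.measurable measurable_const
  -- set a.e. equalities
  have hSA : {ω | Y ω ≤ μ} =ᵐ[P] A := by
    filter_upwards [hge] with ω h
    change (Y ω ≤ μ) = (g ω ≤ μ)
    rw [h]
  have hSB : {ω | μ < Y ω} =ᵐ[P] Aᶜ := by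
    filter_upwards [hge] with ω h
    change (μ < Y ω) = ¬(g ω ≤ μ)
    rw [h, eq_iff_iff, not_le]
  have hPA : P {ω | Y ω ≤ μ} = P A := measure_congr hSA
  have hPB : P {ω | μ < Y ω} = P Aᶜ := measure_congr hSB
  have hIA : ∫ ω in {ω | Y ω ≤ μ}, Y ω ∂P = ∫ ω in A, g ω ∂P := by
    rw [Measure.restrict_congr_set hSA]
    exact integral_congr_ae (ae_restrict_of_ae hge)
  have hIB : ∫ ω in {ω | μ < Y ω}, Y ω ∂P = ∫ ω in Aᶜ, g ω ∂P := by
    rw [Measure.restrict_congr_set hSB]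
    exact integral_congr_ae (ae_restrict_of_ae hge)
  have hming : ∫ ω, min μ (Y ω) ∂P = ∫ ω, min μ (g ω) ∂P := by
    refine integral_congr_ae ?_
    filter_upwards [hge] with ω h
    rw [h]
  set pA := (P A).toReal with hpAdef
  set pB := (P Aᶜ).toReal with hpBdef
  have hA' : 0 < pA := by rwa [hPA] at hA
  have hB' : 0 < pB := by rwa [hPB] at hB
  set IA := ∫ ω in A, g ω ∂P with hIAdef
  set IB := ∫ ω in Aᶜ, g ω ∂P with hIBdef
  have hsum : pA + pB = 1 := by
    rw [hpAdef, hpBdef, ← ENNReal.toReal_add (measure_ne_top _ _) (measure_ne_top _ _),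
      prob_add_prob_compl hAm, ENNReal.toReal_one]
  have hμg : μ = ∫ ω, g ω ∂P := integral_congr_ae hge
  have hIsum : IA + IB = μ := by
    rw [hIAdef, hIBdef, integral_add_compl hAm hgi, hμg]
  have hminInt : Integrable (fun ω => min μ (g ω)) P :=
    (integrable_const μ).inf hgi
  have hminA : ∫ ω in A, min μ (g ω) ∂P = IA :=
    setIntegral_congr_fun hAm (fun ω hω => min_eq_right hω)
  have hminB : ∫ ω in Aᶜ, min μ (g ω) ∂P = pB * μ := by
    rw [setIntegral_congr_fun hAm.compl
      (fun ω (hω : ¬ g ω ≤ μ) => min_eq_left (le_of_not_ge hω)), setIntegral_const, smul_eq_mul, measureReal_def]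
  have hminsplit : ∫ ω, min μ (g ω) ∂P = IA + pB * μ := by
    rw [← integral_add_compl hAm hminInt, hminA, hminB]
  have hIAle : IA ≤ pA * μ := by
    calc IA ≤ ∫ _ω in A, μ ∂P :=
        setIntegral_mono_on hgi.integrableOn (integrable_const μ).integrableOn hAm
          (fun ω hω => hω)
      _ = pA * μ := by rw [setIntegral_const, smul_eq_mul, measureReal_def]
  -- rewrite the goal
  simp only [condMean, hPA, hPB, hIA, hIB, hming, hminsplit, min_self]
  set D := pA * μ - IA with hDdef
  have hDnn : 0 ≤ D := by simp [hDdef]; linarith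
  have hpB : pB = 1 - pA := by linarith
  have hIBeq : IB = μ - IA := by linarith
  have hLHS : μ - (IA + pB * μ) = D := by rw [hpB, hDdef]; ring
  rw [hLHS, abs_of_nonneg hDnn]
  have e1 : μ - IA / pA = D / pA := by rw [hDdef]; field_simp
  have h1pA : (1 : ℝ) - pA ≠ 0 := by rw [← hpB]; exact hB'.ne'
  have e2 : IB / pB - μ = D / pB := by
    rw [hIBeq, hDdef, hpB]; field_simp; ring
  have e3 : IB / pB - IA / pA = D / (pA * pB) := by
    rw [hIBeq, hDdef, hpB]; field_simp; ring
  rw [e1, e2, e3]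
  by_cases hD : D = 0
  · simp [hD]
  · field_simp
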